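/- arXiv:1706.01351 — 3 statements merged into one kernel-verified Lean document; each statement's English description precedes it below -/
import Mathlib

section
/- There exists a constant C > 0 such that for all t, λ, τ > 0, |∫₀ᵗ (iτ + s)^{-3/2} e^{-λ/(iτ+s)} ds| ≤ C/√λ, where i is the imaginary unit and the power (iτ+s)^{-3/2} uses the principal branch. -/
open MeasureTheory Real Complex

open Set in
/-- The dominating real function: `gg l τ s = (s²+τ²)^(-3/4) · exp(-l·s/(s²+τ²))`. -/
noncomputable def gg (l τ s : ℝ) : ℝ :=
  (s^2+τ^2) ^ (-(3/4):ℝ) * Real.exp (-(l*s/(s^2+τ^2)))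

lemma rpow_le_exp' {a x : ℝ} (ha0 : 0 ≤ a) (ha1 : a ≤ 1) (hx : 0 < x) : x ^ a ≤ Real.exp x := by
  rcases le_total x 1 with h | h
  · calc x ^ a ≤ x ^ (0:ℝ) := Real.rpow_le_rpow_of_exponent_ge hx h ha0
    _ = 1 := Real.rpow_zero x
    _ ≤ Real.exp x := by linarith [Real.add_one_le_exp x]
  · calc x ^ a ≤ x ^ (1:ℝ) := Real.rpow_le_rpow_of_exponent_le h ha1
    _ = x := Real.rpow_one x
    _ ≤ Real.exp x := by linarith [Real.add_one_le_exp x]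

lemma exp_neg_le_rpow_neg {a x : ℝ} (ha0 : 0 ≤ a) (ha1 : a ≤ 1) (hx : 0 < x) :
    Real.exp (-x) ≤ x ^ (-a) := by
  rw [Real.rpow_neg hx.le, Real.exp_neg]
  exact inv_anti₀ (Real.rpow_pos_of_pos hx a) (rpow_le_exp' ha0 ha1 hx)

lemma gg_cont (l τ : ℝ) (hτ : 0 < τ) : Continuous (gg l τ) := by
  apply Continuous.mul
  · apply Continuous.rpow_const (by continuity)
    intro x; left; positivity
  · apply Real.continuous_exp.comp
    apply Continuous.neg
    apply Continuous.div (by continuity) (by continuity)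
    intro x; positivity

lemma gg_nonneg (l τ s : ℝ) : 0 ≤ gg l τ s := by
  unfold gg; positivity

lemma gg_le_aux {l τ s a : ℝ} (hl : 0 < l) (hτ : 0 < τ) (hs : 0 < s) (ha0 : 0 ≤ a) (ha1 : a ≤ 1) :
    gg l τ s ≤ (s^2+τ^2) ^ (a-(3/4):ℝ) * (l*s) ^ (-a) := by
  have hP : (0:ℝ) < s^2+τ^2 := by positivity
  have hx : 0 < l*s/(s^2+τ^2) := by positivity
  have h := exp_neg_le_rpow_neg ha0 ha1 hx
  calc gg l τ s ≤ (s^2+τ^2) ^ (-(3/4):ℝ) * (l*s/(s^2+τ^2)) ^ (-a) := by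
        exact mul_le_mul_of_nonneg_left h (by positivity)
    _ = (s^2+τ^2) ^ (a-(3/4):ℝ) * (l*s) ^ (-a) := by
        rw [Real.div_rpow (by positivity) hP.le, Real.rpow_neg hP.le (a), div_inv_eq_mul,
          mul_comm ((l*s)^(-a)), ← mul_assoc, ← Real.rpow_add hP]
        ring_nf

lemma gg_bound1 {l τ s : ℝ} (hl : 0 < l) (hτ : 0 < τ) (hs : 0 < s) :
    gg l τ s ≤ l ^ (-(3/4):ℝ) * s ^ (-(3/4):ℝ) := by
  have h := gg_le_aux (a := 3/4) hl hτ hs (by norm_num) (by norm_num)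
  rw [show (3/4 - (3/4) : ℝ) = 0 by norm_num, Real.rpow_zero, one_mul] at h
  rwa [← Real.mul_rpow hl.le hs.le]

lemma gg_bound2 {l τ s : ℝ} (hl : 0 < l) (hτ : 0 < τ) (hs : 0 < s) :
    gg l τ s ≤ (l ^ (-(1/4):ℝ) * τ⁻¹) * s ^ (-(1/4):ℝ) := by
  have h := gg_le_aux (a := 1/4) hl hτ hs (by norm_num) (by norm_num)
  have hP : (0:ℝ) < s^2+τ^2 := by positivity
  have h2 : (s^2+τ^2) ^ ((1/4)-(3/4):ℝ) ≤ τ⁻¹ := by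
    have : (s^2+τ^2) ^ ((1/4)-(3/4):ℝ) ≤ (τ^2) ^ ((1/4)-(3/4):ℝ) :=
      Real.rpow_le_rpow_of_nonpos (by positivity) (by nlinarith) (by norm_num)
    refine this.trans_eq ?_
    rw [← Real.rpow_natCast τ 2, ← Real.rpow_mul hτ.le]
    norm_num [Real.rpow_neg_one]
  calc gg l τ s ≤ (s^2+τ^2) ^ ((1/4)-(3/4):ℝ) * (l*s) ^ (-(1/4):ℝ) := h
    _ ≤ τ⁻¹ * (l*s) ^ (-(1/4):ℝ) := mul_le_mul_of_nonneg_right h2 (by positivity)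
    _ = (l ^ (-(1/4):ℝ) * τ⁻¹) * s ^ (-(1/4):ℝ) := by
        rw [Real.mul_rpow hl.le hs.le]; ring

lemma gg_bound3 {l τ s : ℝ} (hl : 0 < l) (hτ : 0 < τ) (hs : 0 < s) :
    gg l τ s ≤ s ^ (-(3/2):ℝ) := by
  have hP : (0:ℝ) < s^2+τ^2 := by positivity
  have h1 : (s^2+τ^2) ^ (-(3/4):ℝ) ≤ s ^ (-(3/2):ℝ) := by
    have : (s^2+τ^2) ^ (-(3/4):ℝ) ≤ (s^2) ^ (-(3/4):ℝ) :=
      Real.rpow_le_rpow_of_nonpos (by positivity) (by nlinarith) (by norm_num)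
    refine this.trans_eq ?_
    rw [← Real.rpow_natCast s 2, ← Real.rpow_mul hs.le]
    norm_num
  calc gg l τ s ≤ (s^2+τ^2) ^ (-(3/4):ℝ) * 1 := by
        exact mul_le_mul_of_nonneg_left
          (Real.exp_le_one_iff.mpr (neg_nonpos.mpr (by positivity))) (by positivity)
    _ = (s^2+τ^2) ^ (-(3/4):ℝ) := mul_one _
    _ ≤ s ^ (-(3/2):ℝ) := h1

open Set in
lemma int_Ioc_rpow {A a : ℝ} (hA : 0 < A) (ha : a < 1) :
    ∫ s in Ioc (0:ℝ) A, s ^ (-a) = A ^ (1-a) / (1-a) := by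
  rw [← intervalIntegral.integral_of_le hA.le,
    integral_rpow (Or.inl (by linarith : (-1:ℝ) < -a)),
    Real.zero_rpow (by linarith : -a + 1 ≠ 0)]
  norm_num
  ring_nf

open Set in
lemma intOn_Ioc_rpow {A a : ℝ} (ha : a < 1) :
    IntegrableOn (fun s : ℝ => s ^ (-a)) (Ioc (0:ℝ) A) :=
  (intervalIntegral.intervalIntegrable_rpow' (by linarith : (-1:ℝ) < -a)).1

open Set in
lemma gg_key {l τ : ℝ} (hl : 0 < l) (hτ : 0 < τ) :
    IntegrableOn (gg l τ) (Ioi (0:ℝ)) ∧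
      ∫ s in Ioi (0:ℝ), gg l τ s ≤ 6 * l ^ (-(1/2):ℝ) := by
  set M := max l τ with hMdef
  have hM : 0 < M := lt_max_of_lt_left hl
  have hmeas : ∀ S : Set ℝ, AEStronglyMeasurable (gg l τ) (volume.restrict S) :=
    fun S => (gg_cont l τ hτ).aestronglyMeasurable.restrict
  have hI1 : IntegrableOn (gg l τ) (Ioc 0 M) := (gg_cont l τ hτ).integrableOn_Ioc
  have hItail : IntegrableOn (fun s : ℝ => s ^ (-(3/2):ℝ)) (Ioi M) :=
    integrableOn_Ioi_rpow_of_lt (by norm_num) hM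
  have hI2 : IntegrableOn (gg l τ) (Ioi M) := by
    apply Integrable.mono hItail (hmeas _)
    filter_upwards [ae_restrict_mem measurableSet_Ioi] with s hs
    have hs0 : (0:ℝ) < s := hM.trans hs
    rw [Real.norm_eq_abs, Real.norm_eq_abs, _root_.abs_of_nonneg (gg_nonneg l τ s),
      _root_.abs_of_nonneg (Real.rpow_nonneg hs0.le _)]
    exact gg_bound3 hl hτ hs0
  have hsplit : Ioc (0:ℝ) M ∪ Ioi M = Ioi 0 := Ioc_union_Ioi_eq_Ioi hM.le
  have hInt : IntegrableOn (gg l τ) (Ioi 0) := by rw [← hsplit]; exact hI1.union hI2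
  refine ⟨hInt, ?_⟩
  rw [← hsplit, setIntegral_union (Ioc_disjoint_Ioi le_rfl) measurableSet_Ioi hI1 hI2]
  have htail : ∫ s in Ioi M, gg l τ s ≤ 2 * l ^ (-(1/2):ℝ) := by
    calc ∫ s in Ioi M, gg l τ s ≤ ∫ s in Ioi M, s ^ (-(3/2):ℝ) := by
          apply setIntegral_mono_on hI2 hItail measurableSet_Ioi
          intro s hs; exact gg_bound3 hl hτ (hM.trans hs)
      _ = 2 * M ^ (-(1/2):ℝ) := by
          rw [integral_Ioi_rpow_of_lt (by norm_num) hM,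
            show (-(3/2):ℝ)+1 = -(1/2) by norm_num]
          ring
      _ ≤ 2 * l ^ (-(1/2):ℝ) := by
          have := Real.rpow_le_rpow_of_nonpos hl (le_max_left l τ) (by norm_num : (-(1/2):ℝ) ≤ 0)
          linarith
  have hhead : ∫ s in Ioc (0:ℝ) M, gg l τ s ≤ 4 * l ^ (-(1/2):ℝ) := by
    rcases le_total τ l with h | h
    · have hMl : M = l := max_eq_left h
      calc ∫ s in Ioc (0:ℝ) M, gg l τ s
          ≤ ∫ s in Ioc (0:ℝ) M, l ^ (-(3/4):ℝ) * s ^ (-(3/4):ℝ) := by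
            apply setIntegral_mono_on hI1 ((intOn_Ioc_rpow (by norm_num)).const_mul _)
              measurableSet_Ioc
            intro s hs; exact gg_bound1 hl hτ hs.1
        _ = l ^ (-(3/4):ℝ) * (M ^ (1-(3/4):ℝ) / (1-(3/4):ℝ)) := by
            rw [MeasureTheory.integral_const_mul, int_Ioc_rpow hM (by norm_num)]
        _ = 4 * l ^ (-(1/2):ℝ) := by
            rw [hMl, show ((1:ℝ)-3/4) = (1/4:ℝ) by norm_num]
            have e : l ^ (-(3/4):ℝ) * l ^ ((1/4):ℝ) = l ^ (-(1/2):ℝ) := by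
              rw [← Real.rpow_add hl]; norm_num
            linear_combination 4 * e
    · have hMl : M = τ := max_eq_right h
      calc ∫ s in Ioc (0:ℝ) M, gg l τ s
          ≤ ∫ s in Ioc (0:ℝ) M, (l ^ (-(1/4):ℝ) * τ⁻¹) * s ^ (-(1/4):ℝ) := by
            apply setIntegral_mono_on hI1 ((intOn_Ioc_rpow (by norm_num)).const_mul _)
              measurableSet_Ioc
            intro s hs; exact gg_bound2 hl hτ hs.1
        _ = (l ^ (-(1/4):ℝ) * τ⁻¹) * (M ^ (1-(1/4):ℝ) / (1-(1/4):ℝ)) := by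
            rw [MeasureTheory.integral_const_mul, int_Ioc_rpow hM (by norm_num)]
        _ = (4/3) * (l ^ (-(1/4):ℝ) * τ ^ (-(1/4):ℝ)) := by
            rw [hMl, show τ⁻¹ = τ ^ (-1:ℝ) by rw [Real.rpow_neg_one],
              show ((1:ℝ)-1/4) = (3/4:ℝ) by norm_num]
            have e : τ ^ (-1:ℝ) * τ ^ ((3/4):ℝ) = τ ^ (-(1/4):ℝ) := by
              rw [← Real.rpow_add hτ]; norm_num
            linear_combination (4/3 * l ^ (-(1/4):ℝ)) * e
        _ ≤ (4/3) * (l ^ (-(1/4):ℝ) * l ^ (-(1/4):ℝ)) := by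
            have h1 := Real.rpow_le_rpow_of_nonpos hl h (by norm_num : (-(1/4):ℝ) ≤ 0)
            have h2 : (0:ℝ) ≤ l ^ (-(1/4):ℝ) := Real.rpow_nonneg hl.le _
            nlinarith
        _ ≤ 4 * l ^ (-(1/2):ℝ) := by
            rw [← Real.rpow_add hl]
            have h2 : (0:ℝ) ≤ l ^ (-(1/4) + -(1/4):ℝ) := Real.rpow_nonneg hl.le _
            norm_num; linarith
  linarith

lemma zre (τ s : ℝ) : (Complex.I * (τ:ℂ) + (s:ℂ)).re = s := by simp
lemma zim (τ s : ℝ) : (Complex.I * (τ:ℂ) + (s:ℂ)).im = τ := by simp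

lemma norm_bound (l τ s : ℝ) :
    ‖(Complex.I * (τ:ℂ) + (s:ℂ)) ^ (-(3:ℂ)/2) *
        Complex.exp (-(l:ℂ) / (Complex.I * (τ:ℂ) + (s:ℂ)))‖ ≤ gg l τ s := by
  unfold gg
  have h1 : ‖(Complex.I * (τ:ℂ) + (s:ℂ)) ^ (-(3:ℂ)/2)‖ ≤ (s^2+τ^2) ^ (-(3/4):ℝ) := by
    have h := Complex.norm_cpow_le (Complex.I * (τ:ℂ) + (s:ℂ)) (-(3:ℂ)/2)
    refine h.trans_eq ?_
    have him : (-(3:ℂ)/2).im = 0 := by norm_num [Complex.div_im]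
    have hre : (-(3:ℂ)/2).re = -(3/2) := by norm_num [Complex.div_re]
    rw [him, hre, mul_zero, Real.exp_zero, div_one]
    have habs : ‖Complex.I * (τ:ℂ) + (s:ℂ)‖ = Real.sqrt (s^2+τ^2) := by
      rw [Complex.norm_def, Complex.normSq_apply, zre, zim]; ring_nf
    rw [habs, Real.sqrt_eq_rpow, ← Real.rpow_mul (by positivity)]
    norm_num
  have h2 : ‖Complex.exp (-(l:ℂ) / (Complex.I * (τ:ℂ) + (s:ℂ)))‖ =
      Real.exp (-(l*s/(s^2+τ^2))) := by
    rw [Complex.norm_exp]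
    congr 1
    rw [Complex.div_re, Complex.normSq_apply, zre, zim]
    simp
    ring
  rw [norm_mul, h2]
  exact mul_le_mul_of_nonneg_right h1 (Real.exp_pos _).le

/-- There is a constant `C > 0` such that for all `t, λ, τ > 0`,
`|∫₀ᵗ (iτ+s)^{-3/2} e^{-λ/(iτ+s)} ds| ≤ C/√λ` (principal branch powers). -/
theorem stmt1 :
    ∃ C : ℝ, 0 < C ∧ ∀ t l τ : ℝ, 0 < t → 0 < l → 0 < τ →
      ‖∫ s in (0:ℝ)..t,
          (Complex.I * (τ:ℂ) + (s:ℂ)) ^ (-(3:ℂ)/2) *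
            Complex.exp (-(l:ℂ) / (Complex.I * (τ:ℂ) + (s:ℂ)))‖ ≤ C / Real.sqrt l := by
  refine ⟨6, by norm_num, ?_⟩
  intro t l τ ht hl hτ
  obtain ⟨hInt, hle⟩ := gg_key hl hτ
  have hcont := gg_cont l τ hτ
  have h1 : ‖∫ s in (0:ℝ)..t,
      (Complex.I * (τ:ℂ) + (s:ℂ)) ^ (-(3:ℂ)/2) *
        Complex.exp (-(l:ℂ) / (Complex.I * (τ:ℂ) + (s:ℂ)))‖ ≤ ∫ s in (0:ℝ)..t, gg l τ s := by
    have := intervalIntegral.norm_integral_le_abs_of_norm_le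
      (μ := volume) (a := (0:ℝ)) (b := t)
      (f := fun s : ℝ => (Complex.I * (τ:ℂ) + (s:ℂ)) ^ (-(3:ℂ)/2) *
        Complex.exp (-(l:ℂ) / (Complex.I * (τ:ℂ) + (s:ℂ))))
      (Filter.Eventually.of_forall (fun s => norm_bound l τ s))
      (hcont.intervalIntegrable 0 t)
    refine this.trans_eq (_root_.abs_of_nonneg ?_)
    exact intervalIntegral.integral_nonneg ht.le (fun s _ => gg_nonneg l τ s)
  have h2 : ∫ s in (0:ℝ)..t, gg l τ s ≤ ∫ s in Set.Ioi (0:ℝ), gg l τ s := by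
    rw [intervalIntegral.integral_of_le ht.le]
    exact setIntegral_mono_set hInt
      (Filter.Eventually.of_forall fun s => gg_nonneg l τ s)
      (Set.Ioc_subset_Ioi_self.eventuallyLE)
  have h3 : 6 * l ^ (-(1/2):ℝ) = 6 / Real.sqrt l := by
    rw [Real.sqrt_eq_rpow, Real.rpow_neg hl.le]; ring
  linarith [h1.trans (h2.trans hle)]
end

section
/- In dimension d ≤ 2, the integral ∫_{ℝ^d × ℝ^d} |ξ₁||ξ₂| / ((1+|ξ₁-ξ₂|²)(1+|ξ₁|²)(1+|ξ₂|²)²) dξ₁ dξ₂ is finite. -/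
open MeasureTheory

lemma rpow_neg_three_half_eq {t : ℝ} (ht : 0 < t) :
    t ^ (-(3:ℝ)/2) = (t * Real.sqrt t)⁻¹ := by
  rw [show (-(3:ℝ)/2) = -(1 + 1/2) by norm_num, Real.rpow_neg ht.le,
    Real.rpow_add ht, Real.rpow_one, ← Real.sqrt_eq_rpow]

lemma rpow_neg_five_quarter_eq {t : ℝ} (ht : 0 < t) :
    t ^ (-(5:ℝ)/4) = (t * Real.sqrt (Real.sqrt t))⁻¹ := by
  have h4 : Real.sqrt (Real.sqrt t) = t ^ ((1:ℝ)/4) := by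
    rw [Real.sqrt_eq_rpow, Real.sqrt_eq_rpow, ← Real.rpow_mul ht.le]
    norm_num
  rw [show (-(5:ℝ)/4) = -(1 + 1/4) by norm_num, Real.rpow_neg ht.le,
    Real.rpow_add ht, Real.rpow_one, h4]

set_option maxHeartbeats 1000000 in
lemma key_ineq {X Y a b c : ℝ} (hX : 0 ≤ X) (hY : 0 ≤ Y)
    (ha : 1 ≤ a) (hb : 1 ≤ b) (hc : 1 ≤ c)
    (hXa : X ^ 2 ≤ a) (hYb : Y ^ 2 ≤ b) (habc : a ≤ 2 * c * b) :
    X * Y / (c * a * b ^ 2) ≤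
      c ^ (-(3:ℝ)/2) * b ^ (-(5:ℝ)/4) + a ^ (-(3:ℝ)/2) * b ^ (-(5:ℝ)/4) := by
  have a0 : (0:ℝ) < a := lt_of_lt_of_le one_pos ha
  have b0 : (0:ℝ) < b := lt_of_lt_of_le one_pos hb
  have c0 : (0:ℝ) < c := lt_of_lt_of_le one_pos hc
  rw [rpow_neg_three_half_eq c0, rpow_neg_three_half_eq a0, rpow_neg_five_quarter_eq b0]
  set s := Real.sqrt a with hs
  set u := Real.sqrt c with hu
  set v := Real.sqrt b with hv
  set w := Real.sqrt v with hw
  have s0 : 0 < s := Real.sqrt_pos.mpr a0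
  have u0 : 0 < u := Real.sqrt_pos.mpr c0
  have v0 : 0 < v := Real.sqrt_pos.mpr b0
  have w0 : 0 < w := Real.sqrt_pos.mpr v0
  have hs2 : s ^ 2 = a := Real.sq_sqrt a0.le
  have hu2 : u ^ 2 = c := Real.sq_sqrt c0.le
  have hv2 : v ^ 2 = b := Real.sq_sqrt b0.le
  have hw2 : w ^ 2 = v := Real.sq_sqrt v0.le
  have hsuv : s ≤ 2 * u * v := by
    nlinarith [hs2, hu2, hv2, s0.le, u0.le, v0.le, habc, mul_pos u0 v0]
  set F := X * Y / (c * a * b ^ 2) with hF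
  set G := (c * u)⁻¹ * (b * w)⁻¹ with hG
  set H := (a * s)⁻¹ * (b * w)⁻¹ with hH
  have hG0 : 0 < G := by positivity
  have hH0 : 0 < H := by positivity
  have hF0 : 0 ≤ F := by positivity
  have key : F ^ 2 ≤ 4 * (G * H) := by
    have hGH : G * H = (c * u * (a * s) * (b * w) ^ 2)⁻¹ := by
      rw [hG, hH]; field_simp
    have hFsq : F ^ 2 = (X * Y) ^ 2 / (c * a * b ^ 2) ^ 2 := by
      rw [hF, div_pow]
    rw [hFsq, hGH,
      show (4:ℝ) * (c * u * (a * s) * (b * w) ^ 2)⁻¹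
          = 4 / (c * u * (a * s) * (b * w) ^ 2) by ring,
      div_le_div_iff₀ (by positivity) (by positivity)]
    calc (X * Y) ^ 2 * (c * u * (a * s) * (b * w) ^ 2)
        = (X ^ 2 * Y ^ 2) * ((c * u) * (a * s) * (b ^ 2 * w ^ 2)) := by ring
      _ ≤ (a * b) * ((c * u) * (a * s) * (b ^ 2 * w ^ 2)) := by
          have hXY : X ^ 2 * Y ^ 2 ≤ a * b :=
            mul_le_mul hXa hYb (by positivity) a0.le
          exact mul_le_mul_of_nonneg_right hXY (by positivity)
      _ = (a ^ 2 * b ^ 3 * c * (u * v)) * s := by rw [hw2]; ring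
      _ ≤ (a ^ 2 * b ^ 3 * c * (u * v)) * (2 * u * v) := by
          exact mul_le_mul_of_nonneg_left hsuv (by positivity)
      _ = 2 * (a ^ 2 * b ^ 3 * c) * (u ^ 2 * v ^ 2) := by ring
      _ = 2 * (c * a * b ^ 2) ^ 2 := by rw [hu2, hv2]; ring
      _ ≤ 4 * (c * a * b ^ 2) ^ 2 := by nlinarith [sq_nonneg (c * a * b ^ 2)]
  nlinarith [key, sq_nonneg (G - H), hF0, hG0, hH0]

/-- In dimension `d ≤ 2`, the integral
`∫ |ξ₁||ξ₂| / ((1+|ξ₁-ξ₂|²)(1+|ξ₁|²)(1+|ξ₂|²)²) dξ₁ dξ₂` over `ℝ^d × ℝ^d` is finite. -/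
theorem stmt4 (d : ℕ) (hd : d ≤ 2) :
    Integrable (fun p : EuclideanSpace ℝ (Fin d) × EuclideanSpace ℝ (Fin d) =>
      ‖p.1‖ * ‖p.2‖ /
        ((1 + ‖p.1 - p.2‖^2) * (1 + ‖p.1‖^2) * (1 + ‖p.2‖^2)^2)) := by
  have hdR : (Module.finrank ℝ (EuclideanSpace ℝ (Fin d)) : ℝ) ≤ 2 := by
    simp only [finrank_euclideanSpace, Fintype.card_fin]
    exact_mod_cast hd
  have hφ : Integrable
      (fun x : EuclideanSpace ℝ (Fin d) => (1 + ‖x‖ ^ 2) ^ (-(3:ℝ)/2)) := by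
    have h := integrable_rpow_neg_one_add_norm_sq
      (E := EuclideanSpace ℝ (Fin d)) (μ := volume) (r := 3) (by linarith)
    have he : (-(3:ℝ)/2) = -3/2 := by norm_num
    rw [he]; exact h
  have hψ : Integrable
      (fun x : EuclideanSpace ℝ (Fin d) => (1 + ‖x‖ ^ 2) ^ (-(5:ℝ)/4)) := by
    have h := integrable_rpow_neg_one_add_norm_sq
      (E := EuclideanSpace ℝ (Fin d)) (μ := volume) (r := 5/2) (by linarith)
    have he : (-(5:ℝ)/4) = -(5/2)/2 := by norm_num
    rw [he]; exact h
  have hH : Integrable (fun p : EuclideanSpace ℝ (Fin d) × EuclideanSpace ℝ (Fin d) =>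
      (1 + ‖p.1‖ ^ 2) ^ (-(3:ℝ)/2) * (1 + ‖p.2‖ ^ 2) ^ (-(5:ℝ)/4))
      ((volume : Measure (EuclideanSpace ℝ (Fin d))).prod volume) := hφ.mul_prod hψ
  have hshear := measurePreserving_sub_prod
    (volume : Measure (EuclideanSpace ℝ (Fin d))) (volume : Measure (EuclideanSpace ℝ (Fin d)))
  have hG : Integrable (fun p : EuclideanSpace ℝ (Fin d) × EuclideanSpace ℝ (Fin d) =>
      (1 + ‖p.1 - p.2‖ ^ 2) ^ (-(3:ℝ)/2) * (1 + ‖p.2‖ ^ 2) ^ (-(5:ℝ)/4))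
      ((volume : Measure (EuclideanSpace ℝ (Fin d))).prod volume) := by
    have h := (hshear.integrable_comp hH.aestronglyMeasurable).mpr hH
    simpa [Function.comp_def] using h
  have hGH := hG.add hH
  rw [← Measure.volume_eq_prod] at hGH
  refine hGH.mono' ?_ ?_
  · apply Continuous.aestronglyMeasurable
    apply Continuous.div
    · fun_prop
    · fun_prop
    · intro p
      have h1 : (0:ℝ) < 1 + ‖p.1 - p.2‖ ^ 2 := by positivity
      have h2 : (0:ℝ) < 1 + ‖p.1‖ ^ 2 := by positivity
      have h3 : (0:ℝ) < 1 + ‖p.2‖ ^ 2 := by positivity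
      positivity
  · filter_upwards with p
    rw [Real.norm_eq_abs, abs_of_nonneg (by positivity)]
    refine key_ineq (norm_nonneg _) (norm_nonneg _)
      (le_add_of_nonneg_right (by positivity)) (le_add_of_nonneg_right (by positivity))
      (le_add_of_nonneg_right (by positivity))
      (by nlinarith [sq_nonneg ‖p.1‖]) (by nlinarith [sq_nonneg ‖p.2‖]) ?_
    have h1 : ‖p.1‖ ≤ ‖p.1 - p.2‖ + ‖p.2‖ := by
      simpa using norm_add_le (p.1 - p.2) p.2
    nlinarith [mul_self_le_mul_self (norm_nonneg p.1) h1,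
      sq_nonneg (‖p.1 - p.2‖ - ‖p.2‖),
      mul_nonneg (sq_nonneg ‖p.1 - p.2‖) (sq_nonneg ‖p.2‖)]
end

section
/- In d = 1, for the free Schrödinger kernel s_τ(x) = (2πiτ)^{-1/2} e^{-x²/(2iτ)} and a standard one-dimensional Brownian motion B, the expectation E[∫₀ᵗ∫₀ˢ s_τ(B_s - B_u) du ds] converges as τ → 0⁺ to 4 t^{3/2}/(3√(2π)), and is uniformly bounded for τ > 1. -/
open MeasureTheory Real Complex Filter

noncomputable section

private lemma cont_cpow9 (c : ℂ) {g : ℝ → ℂ} (hg : Continuous g)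
    (h : ∀ x, 0 < (g x).re) : Continuous fun x => g x ^ c :=
  continuous_iff_continuousAt.2 fun x =>
    (continuousAt_cpow_const (Complex.mem_slitPlane_iff.2 (Or.inl (h x)))).comp
      hg.continuousAt

private lemma inner_int9 {τ : ℝ} (hτ : 0 < τ) (s : ℝ) :
    ∫ u in (0:ℝ)..s, ((τ:ℂ) - Complex.I * ((s:ℂ) - (u:ℂ))) ^ (-(1:ℂ)/2)
      = 2*Complex.I*(((τ:ℂ) - Complex.I*(s:ℂ)) ^ ((1:ℂ)/2) - (τ:ℂ) ^ ((1:ℂ)/2)) := by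
  set g : ℝ → ℂ := fun u => (τ:ℂ) - Complex.I * ((s:ℂ) - (u:ℂ)) with hgdef
  have hre : ∀ u : ℝ, 0 < (g u).re := by
    intro u; simp [hgdef, Complex.sub_re, Complex.mul_re, hτ]
  have hgc : Continuous g := by
    continuity
  have hg : ∀ u : ℝ, HasDerivAt g Complex.I u := by
    intro u
    have h1 : HasDerivAt (fun u : ℝ => ((u:ℂ))) 1 u := Complex.ofRealCLM.hasDerivAt
    have h2 := ((h1.const_sub ((s:ℂ))).const_mul Complex.I).const_sub ((τ:ℂ))
    simpa using h2
  have hderiv : ∀ u : ℝ, HasDerivAt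
      (fun u : ℝ => -2*Complex.I * (g u) ^ ((1:ℂ)/2)) ((g u) ^ (-(1:ℂ)/2)) u := by
    intro u
    have h0 : g u ∈ Complex.slitPlane := Complex.mem_slitPlane_iff.2 (Or.inl (hre u))
    have := (((Complex.hasStrictDerivAt_cpow_const (c := (1:ℂ)/2) h0).hasDerivAt).comp u
      (hg u)).const_mul (-2*Complex.I)
    refine this.congr_deriv ?_
    symm
    rw [show (1:ℂ)/2 - 1 = -(1:ℂ)/2 by ring]
    linear_combination ((g u) ^ (-(1:ℂ)/2)) * Complex.I_mul_I
  have hint : IntervalIntegrable (fun u : ℝ => (g u) ^ (-(1:ℂ)/2)) volume 0 s :=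
    (cont_cpow9 _ hgc hre).intervalIntegrable _ _
  rw [intervalIntegral.integral_eq_sub_of_hasDerivAt (fun u _ => hderiv u) hint]
  simp only [hgdef, sub_self, mul_zero, Complex.ofReal_zero, sub_zero]
  ring

private lemma outer_int9 {τ : ℝ} (hτ : 0 < τ) (t : ℝ) :
    ∫ s in (0:ℝ)..t, (2*Complex.I*(((τ:ℂ) - Complex.I*(s:ℂ)) ^ ((1:ℂ)/2) - (τ:ℂ) ^ ((1:ℂ)/2)))
      = -(4/3)*(((τ:ℂ) - Complex.I*(t:ℂ)) ^ ((3:ℂ)/2) - (τ:ℂ)^((3:ℂ)/2))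
        - 2*Complex.I*(τ:ℂ)^((1:ℂ)/2)*t := by
  set g : ℝ → ℂ := fun s => (τ:ℂ) - Complex.I * (s:ℂ) with hgdef
  have hre : ∀ s : ℝ, 0 < (g s).re := by
    intro s; simp [hgdef, Complex.sub_re, Complex.mul_re, hτ]
  have hgc : Continuous g := by continuity
  have hg : ∀ s : ℝ, HasDerivAt g (-Complex.I) s := by
    intro s
    have h1 : HasDerivAt (fun s : ℝ => ((s:ℂ))) 1 s := Complex.ofRealCLM.hasDerivAt
    simpa using (h1.const_mul Complex.I).const_sub ((τ:ℂ))
  have hderiv : ∀ s : ℝ, HasDerivAt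
      (fun s : ℝ => -(4/3)*(g s) ^ ((3:ℂ)/2) - 2*Complex.I*(τ:ℂ)^((1:ℂ)/2)*(s:ℂ))
      (2*Complex.I*((g s) ^ ((1:ℂ)/2) - (τ:ℂ) ^ ((1:ℂ)/2))) s := by
    intro s
    have h0 : g s ∈ Complex.slitPlane := Complex.mem_slitPlane_iff.2 (Or.inl (hre s))
    have h1 := (((Complex.hasStrictDerivAt_cpow_const (c := (3:ℂ)/2) h0).hasDerivAt).comp s
      (hg s)).const_mul (-(4/3) : ℂ)
    have h2 : HasDerivAt (fun s : ℝ => ((s:ℂ))) 1 s := Complex.ofRealCLM.hasDerivAt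
    have h3 := (h2.const_mul (2*Complex.I*(τ:ℂ)^((1:ℂ)/2)))
    have h4 := h1.sub h3
    refine h4.congr_deriv ?_
    symm
    rw [show (3:ℂ)/2 - 1 = (1:ℂ)/2 by ring]
    ring
  have hint : IntervalIntegrable
      (fun s : ℝ => 2*Complex.I*((g s) ^ ((1:ℂ)/2) - (τ:ℂ) ^ ((1:ℂ)/2))) volume 0 t :=
    (continuous_const.mul ((cont_cpow9 _ hgc hre).sub continuous_const)).intervalIntegrable _ _
  rw [intervalIntegral.integral_eq_sub_of_hasDerivAt (fun s _ => hderiv s) hint]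
  simp only [hgdef, Complex.ofReal_zero, mul_zero, sub_zero]
  ring

private lemma key_val9 {t : ℝ} (ht : 0 < t) :
    ((2*(π:ℂ)*Complex.I) ^ (-(1:ℂ)/2)) * ((-(Complex.I*(t:ℂ))) ^ ((3:ℂ)/2))
      = -((t ^ ((3:ℝ)/2) / Real.sqrt (2*π) : ℝ) : ℂ) := by
  have h2pi : (0:ℝ) < 2*π := by positivity
  have ha : (2*(π:ℂ)*Complex.I) ≠ 0 := by
    simp [Complex.ext_iff, Real.pi_ne_zero]
  have hb : (-(Complex.I*(t:ℂ))) ≠ 0 := by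
    simp [Complex.ext_iff, ht.ne']
  have hla : Complex.log (2*(π:ℂ)*Complex.I) = (Real.log (2*π) : ℂ) + (π/2)*Complex.I := by
    apply Complex.ext
    · rw [Complex.log_re]
      have : (2*(π:ℂ)*Complex.I) = ((2*π:ℝ):ℂ) * Complex.I := by push_cast; ring
      rw [this, norm_mul, Complex.norm_I, Complex.norm_real, Real.norm_eq_abs, abs_of_pos h2pi, mul_one]
      simp
    · rw [Complex.log_im]
      have : (2*(π:ℂ)*Complex.I) = ((2*π:ℝ):ℂ) * Complex.I := by push_cast; ring
      rw [this, Complex.arg_real_mul _ h2pi, Complex.arg_I]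
      simp
  have hlb : Complex.log (-(Complex.I*(t:ℂ))) = (Real.log t : ℂ) - (π/2)*Complex.I := by
    have hb' : (-(Complex.I*(t:ℂ))) = ((t:ℝ):ℂ) * (-Complex.I) := by ring
    apply Complex.ext
    · rw [Complex.log_re, hb', norm_mul, Complex.norm_real, Real.norm_eq_abs, abs_of_pos ht]
      simp
    · rw [Complex.log_im, hb', Complex.arg_real_mul _ ht, Complex.arg_neg_I]
      simp
  rw [Complex.cpow_def_of_ne_zero ha, Complex.cpow_def_of_ne_zero hb, ← Complex.exp_add,
    hla, hlb]
  have harg : ((Real.log (2*π) : ℂ) + (π/2)*Complex.I) * (-(1:ℂ)/2)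
      + ((Real.log t : ℂ) - (π/2)*Complex.I) * ((3:ℂ)/2)
      = ((Real.log (2*π) * (-(1/2)) + Real.log t * (3/2) : ℝ) : ℂ) - (π:ℂ)*Complex.I := by
    push_cast; ring
  rw [harg, Complex.exp_sub, Complex.exp_pi_mul_I, ← Complex.ofReal_exp]
  have hr : Real.exp (Real.log (2*π) * (-(1/2)) + Real.log t * (3/2))
      = t ^ ((3:ℝ)/2) / Real.sqrt (2*π) := by
    have e1 : t ^ ((3:ℝ)/2) = Real.exp (Real.log t * (3/2)) := Real.rpow_def_of_pos ht _
    have e2 : Real.sqrt (2*π) = Real.exp (Real.log (2*π) * (1/2)) := by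
      rw [Real.sqrt_eq_rpow]; exact Real.rpow_def_of_pos h2pi _
    rw [e1, e2, ← Real.exp_sub]
    congr 1
    ring
  rw [hr]
  push_cast
  ring

/-- In `d = 1`, for `𝒳_τ(t) = ∫₀ᵗ∫₀ˢ s_τ(B_s-B_u) du ds` with `s_τ` the free Schrödinger
kernel, the expectation `E[𝒳_τ(t)] = (2πi)^{-1/2} ∫₀ᵗ∫₀ˢ (τ - i(s-u))^{-1/2} du ds`
converges as `τ → 0⁺` to `4 t^{3/2}/(3√(2π))`, and is uniformly bounded for `τ > 1`. -/
theorem stmt9 (t : ℝ) (ht : 0 < t) (EX : ℝ → ℂ)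
    (hEX : ∀ τ : ℝ, 0 < τ → EX τ =
      (2 * Real.pi * Complex.I) ^ (-(1:ℂ)/2) *
        ∫ s in (0:ℝ)..t, ∫ u in (0:ℝ)..s,
          ((τ:ℂ) - Complex.I * ((s:ℂ) - (u:ℂ))) ^ (-(1:ℂ)/2)) :
    Tendsto EX (nhdsWithin 0 (Set.Ioi 0))
      (nhds ((4 * t ^ ((3:ℝ)/2) / (3 * Real.sqrt (2 * Real.pi)) : ℝ) : ℂ)) ∧
    ∃ C : ℝ, ∀ τ : ℝ, 1 < τ → ‖EX τ‖ ≤ C := by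
  set c : ℂ := (2 * (π:ℝ) * Complex.I) ^ (-(1:ℂ)/2) with hc
  -- closed form
  have hclosed : ∀ τ : ℝ, 0 < τ → EX τ =
      c * (-(4/3)*(((τ:ℂ) - Complex.I*(t:ℂ)) ^ ((3:ℂ)/2) - (τ:ℂ)^((3:ℂ)/2))
        - 2*Complex.I*(τ:ℂ)^((1:ℂ)/2)*t) := by
    intro τ hτ
    rw [hEX τ hτ]
    congr 1
    rw [← outer_int9 hτ t]
    exact intervalIntegral.integral_congr fun s _ => inner_int9 hτ s
  constructor
  · -- limit
    have h1 : Tendsto (fun τ : ℝ => ((τ:ℂ) - Complex.I*(t:ℂ)) ^ ((3:ℂ)/2))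
        (nhdsWithin 0 (Set.Ioi 0)) (nhds ((-(Complex.I*(t:ℂ))) ^ ((3:ℂ)/2))) := by
      have hbase : Tendsto (fun τ : ℝ => (τ:ℂ) - Complex.I*(t:ℂ)) (nhds 0)
          (nhds (-(Complex.I*(t:ℂ)))) := by
        have hcb : Continuous (fun τ : ℝ => (τ:ℂ) - Complex.I*(t:ℂ)) :=
          Complex.continuous_ofReal.sub continuous_const
        have := hcb.tendsto (0:ℝ)
        simpa using this
      have hcont : ContinuousAt (fun z : ℂ => z ^ ((3:ℂ)/2)) (-(Complex.I*(t:ℂ))) := by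
        apply continuousAt_cpow_const
        refine Complex.mem_slitPlane_iff.2 (Or.inr ?_)
        simp [ht.ne']
      exact (hcont.tendsto.comp hbase).mono_left nhdsWithin_le_nhds
    have hrp : ∀ e : ℝ, 0 < e → Tendsto (fun τ : ℝ => (τ:ℂ) ^ ((e:ℂ)))
        (nhdsWithin 0 (Set.Ioi 0)) (nhds 0) := by
      intro e he
      have h2 : Tendsto (fun τ : ℝ => τ ^ (e:ℝ)) (nhdsWithin 0 (Set.Ioi 0)) (nhds 0) := by
        have := (Real.continuousAt_rpow_const 0 e (Or.inr he.le)).tendsto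
        rw [Real.zero_rpow he.ne'] at this
        exact this.mono_left nhdsWithin_le_nhds
      have h3 : Tendsto (fun τ : ℝ => ((τ ^ (e:ℝ) : ℝ) : ℂ)) (nhdsWithin 0 (Set.Ioi 0))
          (nhds 0) := by
        simpa [Function.comp_def] using (Complex.continuous_ofReal.tendsto 0).comp h2
      refine h3.congr' ?_
      filter_upwards [self_mem_nhdsWithin] with τ (hτ : τ ∈ Set.Ioi 0)
      exact Complex.ofReal_cpow (le_of_lt hτ) e
    have h2 : Tendsto (fun τ : ℝ => (τ:ℂ) ^ ((3:ℂ)/2)) (nhdsWithin 0 (Set.Ioi 0)) (nhds 0) := by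
      have := hrp (3/2) (by norm_num)
      simpa using this
    have h3 : Tendsto (fun τ : ℝ => (τ:ℂ) ^ ((1:ℂ)/2)) (nhdsWithin 0 (Set.Ioi 0)) (nhds 0) := by
      have := hrp (1/2) (by norm_num)
      simpa using this
    have hT : Tendsto (fun τ : ℝ =>
        c * (-(4/3)*(((τ:ℂ) - Complex.I*(t:ℂ)) ^ ((3:ℂ)/2) - (τ:ℂ)^((3:ℂ)/2))
          - 2*Complex.I*(τ:ℂ)^((1:ℂ)/2)*t))
        (nhdsWithin 0 (Set.Ioi 0))
        (nhds (c * (-(4/3)*(((-(Complex.I*(t:ℂ))) ^ ((3:ℂ)/2)) - 0)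
          - 2*Complex.I*(0:ℂ)*t))) := by
      exact (((h1.sub h2).const_mul (-(4/3) : ℂ)).sub
        (((h3.const_mul (2*Complex.I)).mul_const ((t:ℂ))))).const_mul c
    have hval : c * (-(4/3)*(((-(Complex.I*(t:ℂ))) ^ ((3:ℂ)/2)) - 0)
        - 2*Complex.I*(0:ℂ)*t)
        = ((4 * t ^ ((3:ℝ)/2) / (3 * Real.sqrt (2 * π)) : ℝ) : ℂ) := by
      have hk := key_val9 ht
      have h4 : ((4 * t ^ ((3:ℝ)/2) / (3 * Real.sqrt (2 * π)) : ℝ) : ℂ)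
          = -(4/3) * (-((t ^ ((3:ℝ)/2) / Real.sqrt (2*π) : ℝ) : ℂ)) := by
        push_cast; ring
      rw [h4, ← hk]; ring
    rw [← hval]
    refine hT.congr' ?_
    filter_upwards [self_mem_nhdsWithin] with τ (hτ : τ ∈ Set.Ioi 0)
    exact (hclosed τ hτ).symm
  · -- boundedness
    refine ⟨‖c‖ * (t * t), fun τ hτ => ?_⟩
    have hτ0 : (0:ℝ) < τ := lt_trans one_pos hτ
    rw [hEX τ hτ0]
    rw [norm_mul]
    have hb1 : ∀ s : ℝ, s ∈ Set.uIoc (0:ℝ) t →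
        ‖∫ u in (0:ℝ)..s, ((τ:ℂ) - Complex.I * ((s:ℂ) - (u:ℂ))) ^ (-(1:ℂ)/2)‖ ≤ t := by
      intro s hs
      rw [Set.uIoc_of_le ht.le] at hs
      have hbnd : ∀ u : ℝ, u ∈ Set.uIoc (0:ℝ) s →
          ‖((τ:ℂ) - Complex.I * ((s:ℂ) - (u:ℂ))) ^ (-(1:ℂ)/2)‖ ≤ 1 := by
        intro u _
        have hz : ((τ:ℂ) - Complex.I * ((s:ℂ) - (u:ℂ))).re = τ := by
          simp [Complex.sub_re, Complex.mul_re]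
        have habs : (1:ℝ) ≤ ‖(τ:ℂ) - Complex.I * ((s:ℂ) - (u:ℂ))‖ := by
          calc (1:ℝ) ≤ τ := hτ.le
          _ = ((τ:ℂ) - Complex.I * ((s:ℂ) - (u:ℂ))).re := hz.symm
          _ ≤ ‖_‖ := Complex.re_le_norm _
        have hexp : (-(1:ℂ)/2) = (((-(1/2):ℝ)):ℂ) := by norm_num
        rw [hexp]
        rw [Complex.norm_cpow_real]
        exact Real.rpow_le_one_of_one_le_of_nonpos habs (by norm_num)
      have := intervalIntegral.norm_integral_le_of_norm_le_const hbnd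
      calc ‖∫ u in (0:ℝ)..s, ((τ:ℂ) - Complex.I * ((s:ℂ) - (u:ℂ))) ^ (-(1:ℂ)/2)‖
          ≤ 1 * |s - 0| := this
        _ = |s| := by ring_nf
        _ ≤ t := by rw [abs_of_pos hs.1]; exact hs.2
    have h2 := intervalIntegral.norm_integral_le_of_norm_le_const hb1
    have : ‖∫ s in (0:ℝ)..t, ∫ u in (0:ℝ)..s,
        ((τ:ℂ) - Complex.I * ((s:ℂ) - (u:ℂ))) ^ (-(1:ℂ)/2)‖ ≤ t * t := by
      calc _ ≤ t * |t - 0| := h2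
        _ = t * t := by rw [sub_zero, abs_of_pos ht]
    calc ‖c‖ * ‖∫ s in (0:ℝ)..t, ∫ u in (0:ℝ)..s,
          ((τ:ℂ) - Complex.I * ((s:ℂ) - (u:ℂ))) ^ (-(1:ℂ)/2)‖
        ≤ ‖c‖ * (t * t) := by
          exact mul_le_mul_of_nonneg_left this (norm_nonneg _)
end
end
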